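/- Let Σ be an arbitrary p×p real symmetric positive definite matrix, and let w^L be the unique solution of the long-only minimum variance problem: minimize wᵀΣw over all w ∈ ℝᵖ satisfying wᵀ1_p = 1 and w_i ≥ 0 for all i. Let K = {i : w^L_i > 0} be the set of active assets and k = |K|. Let w^K denote the k-vector obtained from w^L by deleting the zero entries outside K, and let Σ^K be the k×k principal submatrix of Σ obtained by deleting the rows and columns not in K. Then Σ^K is invertible and w^K = (Σ^K)⁻¹ 1_k / (1_kᵀ (Σ^K)⁻¹ 1_k); that is, w^K is the unique solution of the unconstrained fully invested minimum variance problem (minimize vᵀΣ^K v subject to vᵀ1_k = 1) for the reduced asset set K, and w^L is recovered from w^K by inserting zero entries for the deleted indices. -/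

import Mathlib

open Matrix Finset

private lemma quad_eq {n : Type*} [Fintype n] (M : Matrix n n ℝ) (v : n → ℝ) :
    ∑ i, ∑ j, v i * M i j * v j = v ⬝ᵥ M *ᵥ v := by
  simp only [dotProduct, mulVec, Finset.mul_sum, mul_assoc]

private lemma quad_expand {n : Type*} [Fintype n] (M : Matrix n n ℝ) (hM : Mᵀ = M)
    (x d : n → ℝ) :
    (x + d) ⬝ᵥ M *ᵥ (x + d)
      = x ⬝ᵥ M *ᵥ x + 2 * (M *ᵥ x ⬝ᵥ d) + d ⬝ᵥ M *ᵥ d := by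
  have h1 : x ⬝ᵥ M *ᵥ d = M *ᵥ x ⬝ᵥ d := by
    rw [dotProduct_mulVec, ← mulVec_transpose, hM]
  have h2 : d ⬝ᵥ M *ᵥ x = M *ᵥ x ⬝ᵥ d := dotProduct_comm _ _
  rw [mulVec_add, dotProduct_add, add_dotProduct, add_dotProduct, h1, h2]
  ring


/-- For an arbitrary `p × p` symmetric positive definite matrix `S`,
let `w` be the (unique) solution of the long-only minimum variance problem
(minimize `wᵀ S w` subject to `∑ wᵢ = 1`, `wᵢ ≥ 0`).  Let `K = {i : wᵢ > 0}` be the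
active set.  Then the principal submatrix `S^K` is invertible, the restriction of `w`
to `K` is given by `(S^K)⁻¹ 1 / (1ᵀ (S^K)⁻¹ 1)`, it is the unique solution of the
fully-invested (long-short) minimum variance problem on the reduced asset set `K`,
and `w` vanishes outside `K`. -/
theorem lomv_active_submatrix_solution {p : ℕ}
    (S : Matrix (Fin p) (Fin p) ℝ) (hS : S.PosDef)
    (w : Fin p → ℝ)
    (hsum : ∑ i, w i = 1)
    (hnonneg : ∀ i, 0 ≤ w i)
    (hmin : ∀ v : Fin p → ℝ, (∑ i, v i = 1) → (∀ i, 0 ≤ v i) →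
      ∑ i, ∑ j, w i * S i j * w j ≤ ∑ i, ∑ j, v i * S i j * v j)
    (K : Finset (Fin p)) (hK : ∀ i, i ∈ K ↔ 0 < w i) :
    -- the principal submatrix Σ^K is invertible
    IsUnit (S.submatrix (fun i : ↥K => (i : Fin p)) (fun j : ↥K => (j : Fin p))).det
    -- the explicit formula w^K = (Σ^K)⁻¹ 1_k / (1_kᵀ (Σ^K)⁻¹ 1_k)
    ∧ (∀ i : ↥K, w (i : Fin p) =
        ((S.submatrix (fun i : ↥K => (i : Fin p)) (fun j : ↥K => (j : Fin p)))⁻¹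
            *ᵥ (fun _ => (1 : ℝ))) i
          / ∑ j : ↥K,
            ((S.submatrix (fun i : ↥K => (i : Fin p)) (fun j : ↥K => (j : Fin p)))⁻¹
              *ᵥ (fun _ => (1 : ℝ))) j)
    -- w^K is fully invested and minimizes the variance among fully invested
    -- portfolios on the reduced asset set K
    ∧ (∑ i : ↥K, w (i : Fin p) = 1)
    ∧ (∀ v : ↥K → ℝ, (∑ i : ↥K, v i = 1) →
        ∑ i : ↥K, ∑ j : ↥K, w (i : Fin p) * S (i : Fin p) (j : Fin p) * w (j : Fin p)
          ≤ ∑ i : ↥K, ∑ j : ↥K, v i * S (i : Fin p) (j : Fin p) * v j)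
    -- and it is the unique such minimizer
    ∧ (∀ v : ↥K → ℝ, (∑ i : ↥K, v i = 1) →
        (∀ u : ↥K → ℝ, (∑ i : ↥K, u i = 1) →
          ∑ i : ↥K, ∑ j : ↥K, v i * S (i : Fin p) (j : Fin p) * v j
            ≤ ∑ i : ↥K, ∑ j : ↥K, u i * S (i : Fin p) (j : Fin p) * u j) →
        v = fun i : ↥K => w (i : Fin p))
    -- w^L is recovered from w^K by inserting zeros outside K
    ∧ (∀ i, i ∉ K → w i = 0) := by
  classical
  set A := S.submatrix (fun i : ↥K => (i : Fin p)) (fun j : ↥K => (j : Fin p)) with hAdef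
  set wK : ↥K → ℝ := fun i => w (i : Fin p) with hwKdef
  -- w vanishes outside K
  have hzero : ∀ i, i ∉ K → w i = 0 := by
    intro i hi
    have : ¬ 0 < w i := fun h => hi ((hK i).mpr h)
    linarith [hnonneg i]
  have hsym : Sᵀ = S := Matrix.IsSymm.eq (by simpa using hS.1)
  -- sum over K
  have hsum_restrict : ∀ g : Fin p → ℝ, (∀ i, i ∉ K → g i = 0) → ∑ i : ↥K, g i = ∑ i, g i := by
    intro g hg
    rw [Finset.sum_coe_sort K g]
    exact Finset.sum_subset (Finset.subset_univ K) (fun i _ hi => hg i hi)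
  have hsumK : ∑ i : ↥K, wK i = 1 := by
    rw [hsum_restrict w hzero]; exact hsum
  -- extension operator
  set E : (↥K → ℝ) → (Fin p → ℝ) := fun x i => if h : i ∈ K then x ⟨i, h⟩ else 0 with hEdef
  have hEapp : ∀ (x : ↥K → ℝ) (i : ↥K), E x (i : Fin p) = x i := by
    intro x i; simp [hEdef]
  have hEzero : ∀ (x : ↥K → ℝ) (i : Fin p), i ∉ K → E x i = 0 := by
    intro x i hi; simp [hEdef, hi]
  have hEne : ∀ x : ↥K → ℝ, x ≠ 0 → E x ≠ 0 := by
    intro x hx h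
    apply hx
    funext i
    have := congrFun h (i : Fin p)
    rw [hEapp] at this
    simpa using this
  have hEquad : ∀ x : ↥K → ℝ, E x ⬝ᵥ S *ᵥ E x = x ⬝ᵥ A *ᵥ x := by
    intro x
    unfold dotProduct
    rw [← hsum_restrict (fun i => E x i * (S *ᵥ E x) i)
      (fun i hi => by simp [hEzero x i hi])]
    apply Finset.sum_congr rfl
    intro i _
    rw [hEapp]
    congr 1
    show (S *ᵥ E x) (i : Fin p) = (A *ᵥ x) i
    unfold mulVec dotProduct
    rw [← hsum_restrict (fun j => S (i:Fin p) j * E x j)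
      (fun j hj => by simp [hEzero x j hj])]
    apply Finset.sum_congr rfl
    intro j _
    rw [hEapp, hAdef]
    rfl
  -- A is positive definite
  have hApos : A.PosDef := by
    refine PosDef.of_dotProduct_mulVec_pos ?_ ?_
    · exact hS.1.submatrix _
    · intro x hx
      have h := hS.dotProduct_mulVec_pos (hEne x hx)
      rw [star_trivial] at h ⊢
      rw [← hEquad]
      simpa using h
  have hdet : IsUnit A.det := isUnit_iff_ne_zero.mpr (ne_of_gt hApos.det_pos)
  have hAsym : Aᵀ = A := Matrix.IsSymm.eq (by simpa using hApos.1)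
  -- key variational inequality
  have hwne : w ≠ 0 := by
    intro h; rw [h] at hsum; simp at hsum
  have hKne : K.Nonempty := by
    by_contra h
    rw [Finset.not_nonempty_iff_eq_empty] at h
    apply hwne
    funext i
    exact hzero i (by simp [h])
  have hkey : ∀ d : Fin p → ℝ, (∑ i, d i = 0) → (∀ i, i ∉ K → d i = 0) →
      0 ≤ S *ᵥ w ⬝ᵥ d := by
    intro d hd0 hdK
    by_contra hc
    push_neg at hc
    set c := S *ᵥ w ⬝ᵥ d with hcdef
    set Qd := d ⬝ᵥ S *ᵥ d with hQddef
    have hQd0 : 0 ≤ Qd := by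
      have := hS.posSemidef.dotProduct_mulVec_nonneg d
      simpa using this
    set m := K.inf' hKne w with hmdef
    have hm0 : 0 < m := by
      rw [hmdef, Finset.lt_inf'_iff]
      intro b hb; exact (hK b).mp hb
    set M := (∑ i, |d i|) + 1 with hMdef
    have hM0 : 0 < M := by positivity
    have hdM : ∀ i, |d i| ≤ M := by
      intro i
      have h1 : |d i| ≤ ∑ j, |d j| :=
        Finset.single_le_sum (f := fun j => |d j|) (fun j _ => abs_nonneg _) (Finset.mem_univ i)
      linarith
    set t := min (m / M) (-c / (Qd + 1)) with htdef
    have ht0 : 0 < t := by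
      apply lt_min
      · positivity
      · apply div_pos (by linarith) (by linarith)
    have htm : t * M ≤ m := by
      have h1 : t ≤ m / M := min_le_left _ _
      calc t * M ≤ (m / M) * M := by nlinarith
        _ = m := by field_simp
    have htc : t * (Qd + 1) ≤ -c := by
      have h1 : t ≤ -c / (Qd + 1) := min_le_right _ _
      rw [← le_div_iff₀ (by linarith)]
      exact h1
    -- the perturbed portfolio
    have hfeas_sum : ∑ i, (w + t • d) i = 1 := by
      simp [Finset.sum_add_distrib, hsum, ← Finset.mul_sum, hd0]
    have hfeas_pos : ∀ i, 0 ≤ (w + t • d) i := by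
      intro i
      by_cases hi : i ∈ K
      · have hwi : m ≤ w i := Finset.inf'_le w hi
        have : t * |d i| ≤ m := le_trans (by nlinarith [hdM i, ht0.le]) htm
        have habs : -(t * |d i|) ≤ t * d i := by
          rw [neg_le]
          calc -(t * d i) = t * (-d i) := by ring
            _ ≤ t * |d i| := by nlinarith [neg_abs_le (d i), abs_nonneg (d i), ht0.le, neg_le_abs (d i)]
        simp only [Pi.add_apply, Pi.smul_apply, smul_eq_mul]
        linarith
      · simp only [Pi.add_apply, Pi.smul_apply, smul_eq_mul]
        rw [hzero i hi, hdK i hi]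
        simp
    have h := hmin (w + t • d) hfeas_sum hfeas_pos
    rw [quad_eq, quad_eq, quad_expand S hsym w (t • d)] at h
    have hdot : S *ᵥ w ⬝ᵥ t • d = t * c := by
      rw [dotProduct_smul]; simp [hcdef, mul_comm]
    have hquad : (t • d) ⬝ᵥ S *ᵥ (t • d) = t * t * Qd := by
      rw [smul_dotProduct, mulVec_smul, dotProduct_smul]
      simp [hQddef]; ring
    rw [hdot, hquad] at h
    have h2 : 0 ≤ 2 * c + t * Qd := by
      have h3 : 0 ≤ t * (2 * c + t * Qd) := by linarith
      nlinarith
    nlinarith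
  have hkey2 : ∀ d : Fin p → ℝ, (∑ i, d i = 0) → (∀ i, i ∉ K → d i = 0) →
      S *ᵥ w ⬝ᵥ d = 0 := by
    intro d hd0 hdK
    have h1 := hkey d hd0 hdK
    have h2 := hkey (-d) (by simpa using hd0) (fun i hi => by simp [hdK i hi])
    rw [dotProduct_neg] at h2
    linarith
  -- (S w) is constant on K
  have hconst : ∀ i ∈ K, ∀ j ∈ K, (S *ᵥ w) i = (S *ᵥ w) j := by
    intro i hi j hj
    by_cases hij : i = j
    · rw [hij]
    · have h := hkey2 (Pi.single i 1 - Pi.single j 1)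
        (by simp [Finset.sum_sub_distrib])
        (fun l hl => by
          have hli : l ≠ i := fun h => hl (h ▸ hi)
          have hlj : l ≠ j := fun h => hl (h ▸ hj)
          simp [Pi.single_apply, hli, hlj])
      rw [dotProduct_sub] at h
      simp only [dotProduct_single, mul_one] at h
      linarith
  set lam := w ⬝ᵥ S *ᵥ w with hlamdef
  have hlampos : 0 < lam := by
    have := hS.dotProduct_mulVec_pos hwne
    simpa [hlamdef] using this
  have hlamK : ∀ i, i ∈ K → (S *ᵥ w) i = lam := by
    intro i hi
    have : lam = ∑ j : ↥K, w (j : Fin p) * (S *ᵥ w) (j : Fin p) := by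
      rw [hlamdef]
      unfold dotProduct
      rw [hsum_restrict (fun j => w j * (S *ᵥ w) j) (fun j hj => by simp [hzero j hj])]
    rw [this]
    have : ∀ j : ↥K, w (j : Fin p) * (S *ᵥ w) (j : Fin p) = w (j : Fin p) * (S *ᵥ w) i := by
      intro j
      rw [hconst (j : Fin p) j.2 i hi]
    rw [Finset.sum_congr rfl (fun j _ => this j), ← Finset.sum_mul, hsumK]
    ring
  -- A wK = lam • 1
  have hAw : A *ᵥ wK = fun _ => lam := by
    funext i
    show (A *ᵥ wK) i = lam
    unfold mulVec dotProduct
    have : ∑ j : ↥K, A i j * wK j = ∑ j : ↥K, (fun j' => S (i : Fin p) j' * w j') (j : Fin p) := by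
      apply Finset.sum_congr rfl
      intro j _
      rfl
    rw [this, hsum_restrict (fun j => S (i : Fin p) j * w j)
      (fun j hj => by simp [hzero j hj])]
    exact hlamK (i : Fin p) i.2
  -- solve for wK
  set u := A⁻¹ *ᵥ (fun _ => (1 : ℝ)) with hudef
  have hwKu : wK = lam • u := by
    have h1 : A⁻¹ *ᵥ (A *ᵥ wK) = wK := by
      rw [mulVec_mulVec, nonsing_inv_mul A hdet, one_mulVec]
    rw [← h1, hAw]
    have : (fun _ : ↥K => lam) = lam • (fun _ : ↥K => (1 : ℝ)) := by
      funext j; simp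
    rw [this, mulVec_smul, hudef]
  set cu := ∑ j : ↥K, u j with hcudef
  have hlamcu : lam * cu = 1 := by
    have : ∑ i : ↥K, wK i = ∑ i : ↥K, lam * u i := by
      apply Finset.sum_congr rfl
      intro i _
      rw [hwKu]; simp
    rw [hsumK] at this
    rw [hcudef, Finset.mul_sum]
    exact this.symm
  have hcune : cu ≠ 0 := by
    intro h; rw [h] at hlamcu; simp at hlamcu
  have hformula : ∀ i : ↥K, wK i = u i / cu := by
    intro i
    have h1 : wK i = lam * u i := by rw [hwKu]; simp
    rw [h1, eq_div_iff hcune]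
    linear_combination u i * hlamcu
  -- minimality on K
  have hminK : ∀ v : ↥K → ℝ, (∑ i : ↥K, v i = 1) →
      wK ⬝ᵥ A *ᵥ wK ≤ v ⬝ᵥ A *ᵥ v := by
    intro v hv
    have hd : v = wK + (v - wK) := by ring_nf
    rw [hd, quad_expand A hAsym wK (v - wK)]
    have hcross : A *ᵥ wK ⬝ᵥ (v - wK) = 0 := by
      rw [hAw]
      unfold dotProduct
      simp only [Pi.sub_apply]
      rw [← Finset.mul_sum]
      rw [Finset.sum_sub_distrib, hv, hsumK]
      ring
    have hQd : 0 ≤ (v - wK) ⬝ᵥ A *ᵥ (v - wK) := by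
      have := hApos.posSemidef.dotProduct_mulVec_nonneg (v - wK)
      simpa using this
    rw [hcross]
    linarith
  -- uniqueness
  have huniq : ∀ v : ↥K → ℝ, (∑ i : ↥K, v i = 1) →
      v ⬝ᵥ A *ᵥ v ≤ wK ⬝ᵥ A *ᵥ wK → v = wK := by
    intro v hv hle
    have hge := hminK v hv
    have heq : v ⬝ᵥ A *ᵥ v = wK ⬝ᵥ A *ᵥ wK := le_antisymm hle hge
    have hd : v = wK + (v - wK) := by ring_nf
    rw [hd, quad_expand A hAsym wK (v - wK)] at heq
    have hcross : A *ᵥ wK ⬝ᵥ (v - wK) = 0 := by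
      rw [hAw]
      unfold dotProduct
      simp only [Pi.sub_apply]
      rw [← Finset.mul_sum, Finset.sum_sub_distrib, hv, hsumK]
      ring
    rw [hcross] at heq
    have hQd0 : (v - wK) ⬝ᵥ A *ᵥ (v - wK) = 0 := by linarith
    have : v - wK = 0 := by
      by_contra h
      have := hApos.dotProduct_mulVec_pos h
      rw [star_trivial] at this
      linarith
    funext i
    have := congrFun this i
    simp only [Pi.sub_apply, Pi.zero_apply] at this
    linarith
  refine ⟨hdet, hformula, hsumK, ?_, ?_, hzero⟩
  · intro v hv
    have h := hminK v hv
    rw [← quad_eq A wK, ← quad_eq A v] at h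
    exact h
  · intro v hv hvmin
    apply huniq v hv
    have h := hvmin wK hsumK
    rw [← quad_eq A v, ← quad_eq A wK]
    exact h
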